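/- Let S and T be inverse semigroups and suppose that the idempotents of S are totally ordered under the natural partial order (for all idempotents e, f of S, either e ≤ f or f ≤ e). Then every premorphism θ : S → T is a semigroup homomorphism: θ(a*b) = θ(a)*θ(b) for all a, b ∈ S. -/
import Mathlib


/-- An inverse semigroup: a semigroup in which every element `a` has a
(unique) inverse `a⁻¹` with `a * a⁻¹ * a = a` and `a⁻¹ * a * a⁻¹ = a⁻¹`. -/
class InverseSemigroup (S : Type*) extends Semigroup S, Inv S where
  mul_inv_mul : ∀ a : S, a * a⁻¹ * a = a
  inv_mul_inv : ∀ a : S, a⁻¹ * a * a⁻¹ = a⁻¹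
  inv_unique : ∀ a b : S, a * b * a = a → b * a * b = b → b = a⁻¹

/-- The natural partial order on an inverse semigroup:
`a ≤ b` iff `a = e * b` for some idempotent `e`. -/
def npo {S : Type*} [InverseSemigroup S] (a b : S) : Prop :=
  ∃ e : S, e * e = e ∧ a = e * b

section IS
variable {S : Type*} [InverseSemigroup S]

lemma IS.ext {a b : S} (h : a = b) (x : S) : a * x = b * x := by rw [h]

lemma IS.mim (a : S) : a * a⁻¹ * a = a := InverseSemigroup.mul_inv_mul a
lemma IS.imi (a : S) : a⁻¹ * a * a⁻¹ = a⁻¹ := InverseSemigroup.inv_mul_inv a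

lemma IS.inv_inv (a : S) : (a⁻¹)⁻¹ = a :=
  (InverseSemigroup.inv_unique a⁻¹ a (IS.imi a) (IS.mim a)).symm

lemma IS.idem_inv {e : S} (he : e * e = e) : e⁻¹ = e :=
  (InverseSemigroup.inv_unique e e (by rw [he, he]) (by rw [he, he])).symm

lemma IS.idem_im (a : S) : (a⁻¹ * a) * (a⁻¹ * a) = a⁻¹ * a := by
  rw [mul_assoc a⁻¹ a, ← mul_assoc a, IS.mim]

lemma IS.idem_mi (a : S) : (a * a⁻¹) * (a * a⁻¹) = a * a⁻¹ := by
  rw [mul_assoc a a⁻¹, ← mul_assoc a⁻¹, IS.imi]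

lemma IS.idem_mul_idem {e f : S} (he : e * e = e) (hf : f * f = f) :
    (e * f) * (e * f) = e * f := by
  have he1 : ∀ x : S, e * (e * x) = e * x := fun x => by rw [← mul_assoc, he]
  have hf1 : ∀ x : S, f * (f * x) = f * x := fun x => by rw [← mul_assoc, hf]
  have hM0 : e * (f * ((e * f)⁻¹ * (e * f))) = e * f := by
    simpa only [mul_assoc] using IS.mim (e * f)
  have hI1 : ∀ x : S, (e * f)⁻¹ * (e * (f * ((e * f)⁻¹ * x))) = (e * f)⁻¹ * x :=
    fun x => by simpa only [mul_assoc] using IS.ext (IS.imi (e * f)) x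
  have hA : f * (e * f)⁻¹ * e = (e * f)⁻¹ := by
    apply InverseSemigroup.inv_unique
    · show e * f * (f * (e * f)⁻¹ * e) * (e * f) = e * f
      simp only [mul_assoc, hf1, he1]
      exact hM0
    · show f * (e * f)⁻¹ * e * (e * f) * (f * (e * f)⁻¹ * e) = f * (e * f)⁻¹ * e
      simp only [mul_assoc, hf1, he1, hI1]
  have hB : (e * f)⁻¹ * (e * f)⁻¹ = (e * f)⁻¹ := by
    conv_lhs => rw [← hA]
    simp only [mul_assoc, he1, hf1, hI1]
    simpa only [mul_assoc] using hA
  have : e * f = (e * f)⁻¹ := (IS.inv_inv (e * f)).symm.trans (IS.idem_inv hB)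
  rw [this, hB]

lemma IS.idem_comm {e f : S} (he : e * e = e) (hf : f * f = f) :
    e * f = f * e := by
  have hC := IS.idem_mul_idem he hf
  have hC' := IS.idem_mul_idem hf he
  have hD : f * e = (e * f)⁻¹ := by
    apply InverseSemigroup.inv_unique
    · calc e * f * (f * e) * (e * f)
          = e * (f * f) * ((e * e) * f) := by simp only [mul_assoc]
        _ = e * f * (e * f) := by rw [he, hf]
        _ = e * f := hC
    · calc f * e * (e * f) * (f * e)
          = f * (e * e) * ((f * f) * e) := by simp only [mul_assoc]
        _ = f * e * (f * e) := by rw [he, hf]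
        _ = f * e := hC'
  rw [hD, IS.idem_inv hC]

/-- two idempotents commute, contextual version -/
lemma IS.swap_idem {e f : S} (he : e * e = e) (hf : f * f = f) (x : S) :
    e * (f * x) = f * (e * x) := by
  rw [← mul_assoc, IS.idem_comm he hf, mul_assoc]

lemma IS.mul_inv_rev (a b : S) : (a * b)⁻¹ = b⁻¹ * a⁻¹ := by
  symm
  apply InverseSemigroup.inv_unique
  · calc a * b * (b⁻¹ * a⁻¹) * (a * b)
        = a * ((b * b⁻¹) * ((a⁻¹ * a) * b)) := by simp only [mul_assoc]
      _ = a * ((a⁻¹ * a) * ((b * b⁻¹) * b)) := by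
          rw [IS.swap_idem (IS.idem_mi b) (IS.idem_im a)]
      _ = (a * a⁻¹ * a) * (b * b⁻¹ * b) := by simp only [mul_assoc]
      _ = a * b := by rw [IS.mim, IS.mim]
  · calc b⁻¹ * a⁻¹ * (a * b) * (b⁻¹ * a⁻¹)
        = b⁻¹ * ((a⁻¹ * a) * ((b * b⁻¹) * a⁻¹)) := by simp only [mul_assoc]
      _ = b⁻¹ * ((b * b⁻¹) * ((a⁻¹ * a) * a⁻¹)) := by
          rw [IS.swap_idem (IS.idem_im a) (IS.idem_mi b)]
      _ = (b⁻¹ * b * b⁻¹) * (a⁻¹ * a * a⁻¹) := by simp only [mul_assoc]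
      _ = b⁻¹ * a⁻¹ := by rw [IS.imi, IS.imi]

lemma IS.npo_inv {a b : S} (h : npo a b) :
    ∃ e : S, e * e = e ∧ a = e * b ∧ a⁻¹ = b⁻¹ * e := by
  obtain ⟨e, he, hab⟩ := h
  refine ⟨e, he, hab, ?_⟩
  have he1 : ∀ x : S, e * (e * x) = e * x := fun x => by rw [← mul_assoc, he]
  have keyn : ∀ x : S, e * (b * (b⁻¹ * x)) = b * (b⁻¹ * (e * x)) := fun x => by
    simpa only [mul_assoc] using IS.swap_idem he (IS.idem_mi b) x
  have mimn : b * (b⁻¹ * b) = b := by simpa only [mul_assoc] using IS.mim b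
  have imin : ∀ x : S, b⁻¹ * (b * (b⁻¹ * x)) = b⁻¹ * x := fun x => by
    simpa only [mul_assoc] using IS.ext (IS.imi b) x
  symm
  apply InverseSemigroup.inv_unique
  · show a * (b⁻¹ * e) * a = a
    rw [hab]
    simp only [mul_assoc, he1]
    rw [← keyn b, he1, mimn]
  · show b⁻¹ * e * a * (b⁻¹ * e) = b⁻¹ * e
    rw [hab]
    simp only [mul_assoc, he1]
    rw [keyn e, he, imin e]

lemma IS.npo_to_right {a b : S} (h : npo a b) : a = b * (a⁻¹ * a) := by
  obtain ⟨e, he, hab, hinv⟩ := IS.npo_inv h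
  have he1 : ∀ x : S, e * (e * x) = e * x := fun x => by rw [← mul_assoc, he]
  have keyn : ∀ x : S, e * (b * (b⁻¹ * x)) = b * (b⁻¹ * (e * x)) := fun x => by
    simpa only [mul_assoc] using IS.swap_idem he (IS.idem_mi b) x
  have mimn : b * (b⁻¹ * b) = b := by simpa only [mul_assoc] using IS.mim b
  rw [hinv, hab]
  simp only [mul_assoc, he1]
  rw [← keyn b, mimn]

lemma IS.npo_to_left {a b : S} (h : npo a b) : a = a * a⁻¹ * b := by
  obtain ⟨e, he, hab, hinv⟩ := IS.npo_inv h
  have he1 : ∀ x : S, e * (e * x) = e * x := fun x => by rw [← mul_assoc, he]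
  have keyn : ∀ x : S, e * (b * (b⁻¹ * x)) = b * (b⁻¹ * (e * x)) := fun x => by
    simpa only [mul_assoc] using IS.swap_idem he (IS.idem_mi b) x
  have mimn : b * (b⁻¹ * b) = b := by simpa only [mul_assoc] using IS.mim b
  rw [hinv, hab]
  simp only [mul_assoc, he1]
  rw [← keyn b, he1, mimn]

lemma IS.npo_mul_right {a b : S} (h : npo a b) (c : S) : npo (a * c) (b * c) := by
  obtain ⟨e, he, hab⟩ := h
  exact ⟨e, he, by rw [hab, mul_assoc]⟩

lemma IS.npo_mul_left {a b : S} (h : npo a b) (c : S) : npo (c * a) (c * b) := by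
  refine ⟨(c * a) * (c * a)⁻¹, IS.idem_mi _, ?_⟩
  calc c * a = c * (a * a⁻¹ * b) := by rw [← IS.npo_to_left h]
    _ = (c * c⁻¹ * c) * (a * a⁻¹ * b) := by rw [IS.mim]
    _ = c * ((c⁻¹ * c) * ((a * a⁻¹) * b)) := by simp only [mul_assoc]
    _ = c * ((a * a⁻¹) * ((c⁻¹ * c) * b)) := by
        rw [IS.swap_idem (IS.idem_im c) (IS.idem_mi a)]
    _ = c * a * (a⁻¹ * c⁻¹) * (c * b) := by simp only [mul_assoc]
    _ = c * a * (c * a)⁻¹ * (c * b) := by rw [IS.mul_inv_rev]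

lemma IS.npo_cancel_right {u v : S} (h : npo u v) (hv : ∃ z, v = u * z) : u = v := by
  obtain ⟨z, hz⟩ := hv
  calc u = u * u⁻¹ * v := IS.npo_to_left h
    _ = u * u⁻¹ * u * z := by rw [hz, ← mul_assoc]
    _ = u * z := by rw [IS.mim]
    _ = v := hz.symm

lemma IS.npo_cancel_left {u v : S} (h : npo u v) (hv : ∃ z, v = z * u) : u = v := by
  obtain ⟨z, hz⟩ := hv
  calc u = v * (u⁻¹ * u) := IS.npo_to_right h
    _ = z * (u * u⁻¹ * u) := by rw [hz]; simp only [mul_assoc]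
    _ = z * u := by rw [IS.mim]
    _ = v := hz.symm

end IS

/-- A premorphism of inverse semigroups: `θ (a * b) ≤ θ a * θ b` in the
natural partial order of the codomain. -/


def IsPremorphism {S T : Type*} [InverseSemigroup S] [InverseSemigroup T]
    (θ : S → T) : Prop :=
  ∀ a b : S, npo (θ (a * b)) (θ a * θ b)

theorem premorphism_is_hom_of_totally_ordered_idempotents
    {S T : Type*} [InverseSemigroup S] [InverseSemigroup T]
    (htot : ∀ e f : S, e * e = e → f * f = f → npo e f ∨ npo f e)
    (θ : S → T) (hθ : IsPremorphism θ) :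
    ∀ a b : S, θ (a * b) = θ a * θ b := by
  intro a b
  rcases htot (a⁻¹ * a) (b * b⁻¹) (IS.idem_im a) (IS.idem_mi b) with h | h
  · -- a⁻¹a ≤ bb⁻¹ so a = (a*b)*b⁻¹
    have h1 : a⁻¹ * a = a⁻¹ * a * (b * b⁻¹) := by
      have h2 := IS.npo_to_left h
      rwa [IS.idem_inv (IS.idem_im a), IS.idem_im a] at h2
    have ha2 : a * (a⁻¹ * a) = a := by rw [← mul_assoc, IS.mim]
    have ha : a * b * b⁻¹ = a := by
      conv_lhs => rw [mul_assoc, ← ha2, mul_assoc, ← h1]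
      exact ha2
    have h2 := hθ (a * b) b⁻¹
    rw [ha] at h2
    have h3 := IS.npo_mul_right h2 (θ b)
    have h4 := IS.npo_to_right h3
    refine IS.npo_cancel_right (hθ a b)
      ⟨θ b⁻¹ * (θ b * ((θ a * θ b)⁻¹ * (θ a * θ b))), ?_⟩
    simpa only [mul_assoc] using h4
  · -- bb⁻¹ ≤ a⁻¹a so b = a⁻¹*(a*b)
    have h1 : b * b⁻¹ = a⁻¹ * a * (b * b⁻¹) := by
      have h2 := IS.npo_to_left h
      rw [IS.idem_inv (IS.idem_mi b), IS.idem_mi b] at h2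
      exact h2.trans (IS.idem_comm (IS.idem_mi b) (IS.idem_im a))
    have mimn : b * (b⁻¹ * b) = b := by simpa only [mul_assoc] using IS.mim b
    have hb : a⁻¹ * (a * b) = b := by
      conv_rhs => rw [← IS.mim b, h1]
      simp only [mul_assoc, mimn]
    have h2 := hθ a⁻¹ (a * b)
    rw [hb] at h2
    have h3 := IS.npo_mul_left h2 (θ a)
    have h4 := IS.npo_to_left h3
    refine IS.npo_cancel_left (hθ a b)
      ⟨θ a * θ b * ((θ a * θ b)⁻¹ * (θ a * θ a⁻¹)), ?_⟩
    simpa only [mul_assoc] using h4
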